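/- For every positive integer k and every graph G, the treedepth of the graph G_k obtained from G by subdividing each edge exactly k−1 times is at most td(G) + ⌈log₂ k⌉. -/

import Mathlib

/-- An elimination forest of height at most `h`: a partial order (the
ancestor order) on the vertices in which the set of ancestors of every vertex
is a chain of at most `h` vertices (including the vertex itself), and the two
endpoints of every edge are comparable. -/
def ElimForestLE {V : Type*} (G : SimpleGraph V) (h : ℕ) : Prop :=
  ∃ le : V → V → Prop, IsPartialOrder V le ∧
    (∀ v : V, IsChain le {u | le u v}) ∧
    (∀ u v : V, G.Adj u v → le u v ∨ le v u) ∧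
    (∀ v : V, {u | le u v}.ncard ≤ h)

/-- The treedepth of a graph: the minimum height of an elimination forest. -/
noncomputable def treedepth {V : Type*} (G : SimpleGraph V) : ℕ :=
  sInf {h | ElimForestLE G h}

/-- The edges of `G` oriented from the smaller endpoint to the larger one. -/
def OrientedEdges {V : Type*} [LinearOrder V] (G : SimpleGraph V) : Type _ :=
  {p : V × V // G.Adj p.1 p.2 ∧ p.1 < p.2}

/-- The graph `G_k` obtained from `G` by subdividing each edge exactly `k - 1`
times: each edge `uv` is replaced by a path `u, p₁, …, p_{k-1}, v`. -/
def Subdiv {V : Type*} [LinearOrder V] (G : SimpleGraph V) (k : ℕ) :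
    SimpleGraph (V ⊕ (OrientedEdges G × Fin (k - 1))) :=
  SimpleGraph.fromRel (fun x y =>
    match x, y with
    | Sum.inl u, Sum.inl v => G.Adj u v ∧ k = 1
    | Sum.inl u, Sum.inr (e, i) =>
        (u = e.1.1 ∧ (i : ℕ) = 0) ∨ (u = e.1.2 ∧ (i : ℕ) = k - 2)
    | Sum.inr (e, i), Sum.inr (f, j) => e = f ∧ (i : ℕ) + 1 = (j : ℕ)
    | Sum.inr _, Sum.inl _ => False)


private def tz (a : ℕ) : ℕ := padicValNat 2 a

private def anc (a b : ℕ) : Prop :=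
  tz b ≤ tz a ∧ b / 2 ^ (tz a + 1) = a / 2 ^ (tz a + 1)

private lemma divHelper {n q r : ℕ} (hn : 0 < n) (hr : r < n) : (n * q + r) / n = q := by
  rw [Nat.mul_add_div hn, Nat.div_eq_of_lt hr, add_zero]

private lemma tz_mod {a : ℕ} (ha : a ≠ 0) : a % 2 ^ (tz a + 1) = 2 ^ tz a := by
  show a % 2 ^ (padicValNat 2 a + 1) = 2 ^ padicValNat 2 a
  obtain ⟨m, hm⟩ := pow_padicValNat_dvd (p := 2) (n := a)
  have hnd : ¬ 2 ^ (padicValNat 2 a + 1) ∣ a := pow_succ_padicValNat_not_dvd ha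
  set t := padicValNat 2 a with htdef
  have hm2 : m % 2 = 1 := by
    rcases Nat.even_or_odd m with he | ho
    · exfalso
      obtain ⟨m', rfl⟩ := he
      exact hnd ⟨m', by rw [hm]; ring⟩
    · exact Nat.odd_iff.mp ho
  rw [hm, pow_succ, Nat.mul_mod_mul_left, hm2, mul_one]

private lemma tz_mod' {b t : ℕ} (h : tz b = t) (hb : b ≠ 0) :
    b % 2 ^ (t + 1) = 2 ^ t := h ▸ tz_mod hb

private lemma tz_pow_le {a : ℕ} (ha : a ≠ 0) : 2 ^ tz a ≤ a :=
  Nat.le_of_dvd (Nat.pos_of_ne_zero ha) pow_padicValNat_dvd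

private lemma div_lift {a b r s : ℕ} (h : r ≤ s) (hab : a / 2 ^ r = b / 2 ^ r) :
    a / 2 ^ s = b / 2 ^ s := by
  obtain ⟨d, rfl⟩ := Nat.exists_eq_add_of_le h
  rw [pow_add, ← Nat.div_div_eq_div_mul, ← Nat.div_div_eq_div_mul, hab]

private lemma anc_refl (a : ℕ) : anc a a := ⟨le_rfl, rfl⟩

private lemma eq_of_tz_eq_div_eq {a b : ℕ} (ha : a ≠ 0) (hb : b ≠ 0)
    (ht : tz a = tz b) (hd : a / 2 ^ (tz a + 1) = b / 2 ^ (tz a + 1)) : a = b := by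
  have e1 := Nat.div_add_mod a (2 ^ (tz a + 1))
  have e2 := Nat.div_add_mod b (2 ^ (tz a + 1))
  rw [tz_mod ha] at e1
  rw [tz_mod' ht.symm hb] at e2
  rw [hd] at e1
  exact e1.symm.trans e2

private lemma anc_antisymm {a b : ℕ} (ha : a ≠ 0) (hb : b ≠ 0)
    (h1 : anc a b) (h2 : anc b a) : a = b := by
  have ht : tz a = tz b := le_antisymm h2.1 h1.1
  exact eq_of_tz_eq_div_eq ha hb ht h1.2.symm

private lemma anc_trans {a b c : ℕ} (h1 : anc a b) (h2 : anc b c) : anc a c := by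
  refine ⟨h2.1.trans h1.1, ?_⟩
  have := div_lift (Nat.succ_le_succ h1.1) h2.2
  exact this.trans h1.2

private lemma anc_chain {a b c : ℕ} (h1 : anc a c) (h2 : anc b c) :
    anc a b ∨ anc b a := by
  rcases le_total (tz a) (tz b) with h | h
  · right
    refine ⟨h, ?_⟩
    have ha' := div_lift (Nat.succ_le_succ h) h1.2
    exact ha'.symm.trans h2.2
  · left
    refine ⟨h, ?_⟩
    have hb' := div_lift (Nat.succ_le_succ h) h2.2
    exact hb'.symm.trans h1.2

private lemma anc_level_eq {a b c : ℕ} (ha : a ≠ 0) (hb : b ≠ 0)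
    (h1 : anc a c) (h2 : anc b c) (ht : tz a = tz b) : a = b := by
  refine eq_of_tz_eq_div_eq ha hb ht ?_
  have := h2.2
  rw [← ht] at this
  exact h1.2.symm.trans this

private lemma anc_succ {a : ℕ} (ha : a ≠ 0) : anc a (a + 1) ∨ anc (a + 1) a := by
  rcases Nat.even_or_odd a with he | ho
  · -- a even
    obtain ⟨r, hr⟩ := he
    have htz1 : tz (a + 1) = 0 :=
      padicValNat.eq_zero_of_not_dvd (by omega)
    have hm := tz_mod ha
    set s := tz a with hs
    have h2s : (2:ℕ) ^ (s+1) = 2 ^ s * 2 := pow_succ 2 s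
    have hs1 : 1 ≤ s := by
      rcases Nat.eq_zero_or_pos s with h0 | h1
      · rw [h0] at hm; simp at hm; omega
      · exact h1
    have h2le : (2:ℕ) ≤ 2 ^ s := by
      calc (2:ℕ) = 2 ^ 1 := (pow_one 2).symm
      _ ≤ 2 ^ s := Nat.pow_le_pow_right (by norm_num) hs1
    have hdm := Nat.div_add_mod a (2 ^ (s + 1))
    rw [hm] at hdm
    obtain ⟨q, hq⟩ : ∃ q, a = 2 ^ (s+1) * q + 2 ^ s := ⟨_, hdm.symm⟩
    have e1 : a / 2 ^ (s+1) = q := by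
      rw [hq]; exact divHelper (n := 2 ^ (s+1)) (by positivity) (by omega)
    have e2 : (a + 1) / 2 ^ (s+1) = q := by
      have : a + 1 = 2 ^ (s+1) * q + (2 ^ s + 1) := by omega
      rw [this]; exact divHelper (n := 2 ^ (s+1)) (by positivity) (by omega)
    exact Or.inl ⟨by rw [htz1]; exact Nat.zero_le _, e2.trans e1.symm⟩
  · -- a odd
    have htz0 : tz a = 0 := padicValNat.eq_zero_of_not_dvd (by
      rcases ho with ⟨r, hr⟩; omega)
    have hm := tz_mod (a := a + 1) (by omega)
    set s := tz (a + 1) with hs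
    have h2s : (2:ℕ) ^ (s+1) = 2 ^ s * 2 := pow_succ 2 s
    have h1le : (1:ℕ) ≤ 2 ^ s := Nat.one_le_two_pow
    have hdm := Nat.div_add_mod (a + 1) (2 ^ (s + 1))
    rw [hm] at hdm
    obtain ⟨q, hq⟩ : ∃ q, a + 1 = 2 ^ (s+1) * q + 2 ^ s := ⟨_, hdm.symm⟩
    have e1 : a / 2 ^ (s+1) = q := by
      have : a = 2 ^ (s+1) * q + (2 ^ s - 1) := by omega
      rw [this]; exact divHelper (n := 2 ^ (s+1)) (by positivity) (by omega)
    have e2 : (a + 1) / 2 ^ (s+1) = q := by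
      rw [hq]; exact divHelper (n := 2 ^ (s+1)) (by positivity) (by omega)
    exact Or.inr ⟨by rw [htz0]; exact Nat.zero_le _, e1.trans e2.symm⟩

private def sle {V : Type} [LinearOrder V] {G : SimpleGraph V} {k : ℕ}
    (le : V → V → Prop) (d : OrientedEdges G → V) :
    (V ⊕ (OrientedEdges G × Fin (k - 1))) → (V ⊕ (OrientedEdges G × Fin (k - 1))) → Prop
  | Sum.inl u, Sum.inl v => le u v
  | Sum.inl u, Sum.inr ei => le u (d ei.1)
  | Sum.inr _, Sum.inl _ => False
  | Sum.inr ei, Sum.inr fj => ei.1 = fj.1 ∧ anc ((ei.2 : ℕ) + 1) ((fj.2 : ℕ) + 1)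

theorem stmt_2 {V : Type} [Fintype V] [LinearOrder V] (G : SimpleGraph V)
    (k : ℕ) (hk : 1 ≤ k) :
    treedepth (Subdiv G k) ≤ treedepth G + Nat.clog 2 k := by
  classical
  haveI instOE : Finite (OrientedEdges G) := by
    unfold OrientedEdges; infer_instance
  haveI instW : Finite (V ⊕ (OrientedEdges G × Fin (k - 1))) := by infer_instance
  -- the treedepth set of `G` is nonempty
  have hne : {h | ElimForestLE G h}.Nonempty := by
    refine ⟨Fintype.card V, fun u v => u ≤ v, inferInstance, ?_, ?_, ?_⟩
    · intro v x _ y _ _; exact le_total x y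
    · intro u v _; exact le_total u v
    · intro v
      calc ({u | u ≤ v}).ncard ≤ (Set.univ : Set V).ncard :=
            Set.ncard_le_ncard (Set.subset_univ _) Set.finite_univ
        _ = Fintype.card V := by rw [Set.ncard_univ, Nat.card_eq_fintype_card]
  have hmem : ElimForestLE G (treedepth G) := Nat.sInf_mem hne
  obtain ⟨le, hpo, hchain, hcomp, hcard⟩ := hmem
  have hrefl : ∀ x, le x x := hpo.toIsPreorder.toRefl.refl
  have htrans : ∀ a b c, le a b → le b c → le a c :=
    fun a b c => hpo.toIsPreorder.toIsTrans.trans a b c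
  have hanti : ∀ a b, le a b → le b a → a = b :=
    fun a b => hpo.toAntisymm.antisymm a b
  set d : OrientedEdges G → V := fun e => if le e.1.1 e.1.2 then e.1.2 else e.1.1 with hd
  have hdtop : ∀ (e : OrientedEdges G) (u : V), u = e.1.1 ∨ u = e.1.2 → le u (d e) := by
    intro e u hu
    by_cases h12 : le e.1.1 e.1.2
    · have hde : d e = e.1.2 := by simp only [hd]; rw [if_pos h12]
      rcases hu with rfl | rfl
      · rw [hde]; exact h12
      · rw [hde]; exact hrefl _
    · have h21 : le e.1.2 e.1.1 := (hcomp _ _ e.2.1).resolve_left h12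
      have hde : d e = e.1.1 := by simp only [hd]; rw [if_neg h12]
      rcases hu with rfl | rfl
      · rw [hde]; exact hrefl _
      · rw [hde]; exact h21
  have hmem2 : ElimForestLE (Subdiv G k) (treedepth G + Nat.clog 2 k) := by
    refine ⟨sle le d, ?_, ?_, ?_, ?_⟩
    · -- partial order
      refine { refl := ?_, trans := ?_, antisymm := ?_ }
      · -- refl
        rintro (u | ⟨e, i⟩)
        · exact hrefl u
        · exact ⟨rfl, anc_refl _⟩
      · -- trans
        rintro (u | ⟨e, i⟩) (v | ⟨f, j⟩) (w | ⟨g, l⟩) h1 h2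
        · exact htrans _ _ _ h1 h2
        · exact htrans _ _ _ h1 h2
        · exact h2.elim
        · show le u (d g)
          have hfg : f = g := h2.1
          rw [← hfg]; exact h1
        · exact h1.elim
        · exact h1.elim
        · exact h2.elim
        · exact ⟨h1.1.trans h2.1, anc_trans h1.2 h2.2⟩
      · -- antisymm
        rintro (u | ⟨e, i⟩) (v | ⟨f, j⟩) h1 h2
        · exact congrArg Sum.inl (hanti _ _ h1 h2)
        · exact h2.elim
        · exact h1.elim
        · have hval : (i : ℕ) + 1 = (j : ℕ) + 1 :=
            anc_antisymm (by omega) (by omega) h1.2 h2.2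
          have hij : i = j := Fin.ext (by omega)
          have hef : e = f := h1.1
          rw [hef, hij]
    · -- chains
      rintro (v | ⟨e, j⟩)
      · rintro (u | ⟨f, i⟩) hx (u' | ⟨f', i'⟩) hy hne'
        · exact hchain v hx hy (fun h => hne' (congrArg Sum.inl h))
        · exact hy.elim
        · exact hx.elim
        · exact hx.elim
      · rintro (u | ⟨f, i⟩) hx (u' | ⟨f', i'⟩) hy hne'
        · exact hchain (d e) hx hy (fun h => hne' (congrArg Sum.inl h))
        · left; show le u (d f')
          have hfe : f' = e := hy.1
          rw [hfe]; exact hx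
        · right; show le u' (d f)
          have hfe : f = e := hx.1
          rw [hfe]; exact hy
        · rcases anc_chain hx.2 hy.2 with h | h
          · left; exact ⟨hx.1.trans hy.1.symm, h⟩
          · right; exact ⟨hy.1.trans hx.1.symm, h⟩
    · -- edges comparable
      intro x y hadj
      have hadj' := (SimpleGraph.fromRel_adj _ x y).mp hadj
      rcases x with u | ⟨e, i⟩ <;> rcases y with v | ⟨f, j⟩
      · obtain ⟨_, h | h⟩ := hadj'
        · exact hcomp u v h.1
        · exact hcomp u v h.1.symm
      · obtain ⟨_, h | h⟩ := hadj'
        · left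
          exact hdtop f u (by rcases h with ⟨h', _⟩ | ⟨h', _⟩ <;> [left; right] <;> exact h')
        · exact h.elim
      · obtain ⟨_, h | h⟩ := hadj'
        · exact h.elim
        · right
          exact hdtop e v (by rcases h with ⟨h', _⟩ | ⟨h', _⟩ <;> [left; right] <;> exact h')
      · obtain ⟨_, h | h⟩ := hadj'
        · obtain ⟨rfl, hij⟩ := h
          rcases anc_succ (a := (i : ℕ) + 1) (by omega) with hh | hh
          · left
            refine ⟨rfl, ?_⟩
            have hj : (j : ℕ) + 1 = (i : ℕ) + 1 + 1 := by omega
            rw [hj]; exact hh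
          · right
            refine ⟨rfl, ?_⟩
            have hj : (j : ℕ) + 1 = (i : ℕ) + 1 + 1 := by omega
            rw [hj]; exact hh
        · obtain ⟨rfl, hij⟩ := h
          rcases anc_succ (a := (j : ℕ) + 1) (by omega) with hh | hh
          · right
            refine ⟨rfl, ?_⟩
            have hi : (i : ℕ) + 1 = (j : ℕ) + 1 + 1 := by omega
            rw [hi]; exact hh
          · left
            refine ⟨rfl, ?_⟩
            have hi : (i : ℕ) + 1 = (j : ℕ) + 1 + 1 := by omega
            rw [hi]; exact hh
    · -- cardinality
      rintro (v | ⟨e, j⟩)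
      · have hset : {x | sle (k := k) le d x (Sum.inl v)} = Sum.inl '' {u | le u v} := by
          ext x
          rcases x with u | ⟨f, i⟩
          · simp [sle]
          · simp [sle]
        rw [hset, Set.ncard_image_of_injective _ Sum.inl_injective]
        exact (hcard v).trans (Nat.le_add_right _ _)
      · set A : Set (V ⊕ (OrientedEdges G × Fin (k - 1))) := Sum.inl '' {u | le u (d e)} with hA
        set S : Set (Fin (k - 1)) := {i | anc ((i : ℕ) + 1) ((j : ℕ) + 1)} with hS
        set B : Set (V ⊕ (OrientedEdges G × Fin (k - 1))) :=
          (fun i => Sum.inr (e, i)) '' S with hB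
        have hsub : {x | sle (k := k) le d x (Sum.inr (e, j))} ⊆ A ∪ B := by
          rintro (u | ⟨f, i⟩) hx
          · exact Or.inl ⟨u, hx, rfl⟩
          · right
            refine ⟨i, hx.2, ?_⟩
            have hfe : f = e := hx.1
            show Sum.inr (e, i) = Sum.inr (f, i)
            rw [hfe]
        have hAcard : A.ncard ≤ treedepth G := by
          rw [hA, Set.ncard_image_of_injective _ Sum.inl_injective]
          exact hcard (d e)
        have hBcard : B.ncard ≤ Nat.clog 2 k := by
          have hinj : Function.Injective (fun i : Fin (k - 1) =>
              (Sum.inr (e, i) : V ⊕ (OrientedEdges G × Fin (k - 1)))) := by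
            intro a b hab; simpa using hab
          rw [hB, Set.ncard_image_of_injective _ hinj]
          have hS2 : S.ncard ≤ ((Finset.range (Nat.clog 2 k) : Finset ℕ) : Set ℕ).ncard := by
            refine Set.ncard_le_ncard_of_injOn (fun i => tz ((i : ℕ) + 1)) ?_ ?_ (Set.toFinite _)
            · intro i _
              simp only [Finset.coe_range, Set.mem_Iio]
              have p1 : 2 ^ tz ((i : ℕ) + 1) ≤ (i : ℕ) + 1 := tz_pow_le (by omega)
              have p2 : k ≤ 2 ^ Nat.clog 2 k := Nat.le_pow_clog one_lt_two k
              have p3 : (i : ℕ) < k - 1 := i.isLt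
              have hlt : (2 : ℕ) ^ tz ((i : ℕ) + 1) < 2 ^ Nat.clog 2 k := by omega
              exact (Nat.pow_lt_pow_iff_right one_lt_two).mp hlt
            · intro a ha b hb hab
              have : (a : ℕ) + 1 = (b : ℕ) + 1 :=
                anc_level_eq (by omega) (by omega) ha hb hab
              exact Fin.ext (by omega)
          rw [Set.ncard_coe_finset, Finset.card_range] at hS2
          exact hS2
        calc {x | sle (k := k) le d x (Sum.inr (e, j))}.ncard ≤ (A ∪ B).ncard :=
              Set.ncard_le_ncard hsub (Set.toFinite _)
          _ ≤ A.ncard + B.ncard := Set.ncard_union_le _ _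
          _ ≤ treedepth G + Nat.clog 2 k := Nat.add_le_add hAcard hBcard
  exact Nat.sInf_le hmem2
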